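/- arXiv:0803.1333 — 2 statements merged into one kernel-verified Lean document; each statement's English description precedes it below -/
import Mathlib

section
/- For each i ∈ {1,...,n}, the i-th systole function syst_i : SL_n(ℝ) → (0,∞) is continuous, where syst_i(A) = inf { r : the real span of { v ∈ ℤ^n : |Av| < r } has dimension ≥ i }. -/
open Matrix Submodule Module

/-- The Euclidean norm of a vector in `ℝⁿ`. -/
noncomputable def euclNorm {n : ℕ} (w : Fin n → ℝ) : ℝ := Real.sqrt (∑ i, (w i) ^ 2)

/-- The real vector associated to an integer vector. -/
def intVec {n : ℕ} (v : Fin n → ℤ) : Fin n → ℝ := fun i => (v i : ℝ)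

/-- The systole (first minimum) of the lattice `Aℤⁿ`. -/
noncomputable def syst1 {n : ℕ} (A : Matrix (Fin n) (Fin n) ℝ) : ℝ :=
  sInf {r : ℝ | ∃ v : Fin n → ℤ, v ≠ 0 ∧ euclNorm (A.mulVec (intVec v)) = r}

/-- The `i`-th systole (Minkowski's `i`-th successive minimum) of the lattice `Aℤⁿ`. -/
noncomputable def systI {n : ℕ} (A : Matrix (Fin n) (Fin n) ℝ) (i : ℕ) : ℝ :=
  sInf {r : ℝ | i ≤ Module.finrank ℝ (Submodule.span ℝ
    (intVec '' {v : Fin n → ℤ | euclNorm (A.mulVec (intVec v)) < r}))}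

/-- The set of shortest (nonzero) integer vectors of `A`. -/
noncomputable def S1 {n : ℕ} (A : Matrix (Fin n) (Fin n) ℝ) : Set (Fin n → ℤ) :=
  {v | v ≠ 0 ∧ euclNorm (A.mulVec (intVec v)) = syst1 A}

/-- `A` is well-rounded if its shortest vectors span `ℝⁿ`. -/
noncomputable def WellRounded {n : ℕ} (A : Matrix (Fin n) (Fin n) ℝ) : Prop :=
  Submodule.span ℝ (intVec '' S1 A) = ⊤

/-- The span of the integer vectors realized up to the `i`-th minimum. -/
noncomputable def LambdaI {n : ℕ} (A : Matrix (Fin n) (Fin n) ℝ) (i : ℕ) :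
    Submodule ℝ (Fin n → ℝ) :=
  Submodule.span ℝ (intVec '' {v : Fin n → ℤ | euclNorm (A.mulVec (intVec v)) ≤ systI A i})

/-- The real matrix associated to an element of `SL_n(ℤ)`. -/
def SLZtoR {n : ℕ} (γ : Matrix.SpecialLinearGroup (Fin n) ℤ) : Matrix (Fin n) (Fin n) ℝ :=
  (γ : Matrix (Fin n) (Fin n) ℤ).map (Int.cast)


/- Auxiliary lemmas -/

lemma enorm_eq' {n : ℕ} (w : Fin n → ℝ) :
    euclNorm w = ‖(WithLp.equiv 2 (Fin n → ℝ)).symm w‖ := by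
  rw [EuclideanSpace.norm_eq, euclNorm]
  congr 1
  refine Finset.sum_congr rfl fun j _ => ?_
  rw [Real.norm_eq_abs, sq_abs]; rfl

lemma enorm_nonneg' {n : ℕ} (w : Fin n → ℝ) : 0 ≤ euclNorm w := Real.sqrt_nonneg _

lemma enorm_mulVec_le {n : ℕ} (M : Matrix (Fin n) (Fin n) ℝ) (w : Fin n → ℝ) :
    euclNorm (M.mulVec w) ≤ ‖toEuclideanCLM (𝕜 := ℝ) M‖ * euclNorm w := by
  rw [enorm_eq', enorm_eq']
  have h := (toEuclideanCLM (𝕜 := ℝ) M).le_opNorm ((WithLp.equiv 2 (Fin n → ℝ)).symm w)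
  exact h

lemma cont_norm_clm {n : ℕ} : Continuous fun M : Matrix (Fin n) (Fin n) ℝ =>
    ‖toEuclideanCLM (𝕜 := ℝ) M‖ := by
  have hlin : Continuous fun M : Matrix (Fin n) (Fin n) ℝ => toEuclideanCLM (𝕜 := ℝ) M :=
    LinearMap.continuous_of_finiteDimensional
      { toFun := fun M => toEuclideanCLM (𝕜 := ℝ) M
        map_add' := fun x y => map_add _ x y
        map_smul' := fun c x => map_smul (toEuclideanCLM (𝕜 := ℝ)) c x }
  exact continuous_norm.comp hlin

lemma norm_clm_one {n : ℕ} (hn : 1 ≤ n) :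
    ‖toEuclideanCLM (𝕜 := ℝ) (1 : Matrix (Fin n) (Fin n) ℝ)‖ = 1 := by
  haveI : Nonempty (Fin n) := ⟨⟨0, hn⟩⟩
  rw [_root_.map_one]
  exact norm_one

/-- The defining set of `systI`. -/
def sysSet {n : ℕ} (A : Matrix (Fin n) (Fin n) ℝ) (i : ℕ) : Set ℝ :=
  {r : ℝ | i ≤ Module.finrank ℝ (Submodule.span ℝ
    (intVec '' {v : Fin n → ℤ | euclNorm (A.mulVec (intVec v)) < r}))}

lemma systI_eq' {n : ℕ} (A : Matrix (Fin n) (Fin n) ℝ) (i : ℕ) :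
    systI A i = sInf (sysSet A i) := rfl

lemma sysSet_pos {n : ℕ} (A : Matrix (Fin n) (Fin n) ℝ) {i : ℕ} (h1 : 1 ≤ i)
    {r : ℝ} (hr : r ∈ sysSet A i) : 0 < r := by
  by_contra h
  push_neg at h
  have hempty : {v : Fin n → ℤ | euclNorm (A.mulVec (intVec v)) < r} = ∅ := by
    ext v
    simp only [Set.mem_setOf_eq, Set.mem_empty_iff_false, iff_false, not_lt]
    exact h.trans (enorm_nonneg' _)
  rw [sysSet, Set.mem_setOf_eq, hempty] at hr
  rw [Set.image_empty, Submodule.span_empty] at hr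
  rw [finrank_bot] at hr
  omega

lemma sysSet_bddBelow {n : ℕ} (A : Matrix (Fin n) (Fin n) ℝ) {i : ℕ} (h1 : 1 ≤ i) :
    BddBelow (sysSet A i) :=
  ⟨0, fun _ hr => (sysSet_pos A h1 hr).le⟩

lemma sysSet_nonempty {n : ℕ} (A : Matrix (Fin n) (Fin n) ℝ) {i : ℕ} (h2 : i ≤ n) :
    (sysSet A i).Nonempty := by
  refine ⟨1 + ∑ j, euclNorm (A.mulVec (intVec (Pi.single j 1))), ?_⟩
  rw [sysSet, Set.mem_setOf_eq]
  have hspan : Submodule.span ℝ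
      (intVec '' {v : Fin n → ℤ | euclNorm (A.mulVec (intVec v)) <
        1 + ∑ j, euclNorm (A.mulVec (intVec (Pi.single j 1)))}) = ⊤ := by
    rw [eq_top_iff, ← (Pi.basisFun ℝ (Fin n)).span_eq]
    refine Submodule.span_le.2 ?_
    rintro x ⟨j, rfl⟩
    refine Submodule.subset_span ⟨Pi.single j 1, ?_, ?_⟩
    · have : euclNorm (A.mulVec (intVec (Pi.single j 1))) ≤
          ∑ k, euclNorm (A.mulVec (intVec (Pi.single k 1))) :=
        Finset.single_le_sum (f := fun k => euclNorm (A.mulVec (intVec (Pi.single k 1))))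
          (fun k _ => enorm_nonneg' _) (Finset.mem_univ j)
      simpa using this.trans_lt (by linarith)
    · rw [Pi.basisFun_apply]
      ext k
      simp [intVec, Pi.single_apply]
  rw [hspan]
  simpa using h2

lemma systI_nonneg' {n : ℕ} (A : Matrix (Fin n) (Fin n) ℝ) {i : ℕ} (h1 : 1 ≤ i) :
    0 ≤ systI A i :=
  Real.sInf_nonneg (fun _ hr => (sysSet_pos A h1 hr).le)

lemma systI_le_mul {n : ℕ} (A B : Matrix (Fin n) (Fin n) ℝ) {i : ℕ} (h1 : 1 ≤ i) (h2 : i ≤ n)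
    {c : ℝ} (hc : 0 < c)
    (h : ∀ v : Fin n → ℤ, euclNorm (B.mulVec (intVec v)) ≤ c * euclNorm (A.mulVec (intVec v))) :
    systI B i ≤ c * systI A i := by
  have hne := sysSet_nonempty A h2
  have hbddB := sysSet_bddBelow B h1
  have hmem : ∀ r ∈ sysSet A i, c * r ∈ sysSet B i := by
    intro r hr
    rw [sysSet, Set.mem_setOf_eq] at hr ⊢
    refine hr.trans (Submodule.finrank_mono (Submodule.span_mono (Set.image_mono ?_)))
    intro v hv
    exact (h v).trans_lt ((mul_lt_mul_iff_right₀ hc).2 hv)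
  rw [systI_eq', systI_eq', ← div_le_iff₀' hc]
  refine le_csInf hne fun r hr => ?_
  rw [div_le_iff₀' hc]
  exact csInf_le hbddB (hmem r hr)

/-- the `i`-th systole function is continuous on `SL_n(ℝ)`. -/
theorem stmt6 (n : ℕ) (i : ℕ) (h1 : 1 ≤ i) (h2 : i ≤ n) :
    Continuous fun A : {A : Matrix (Fin n) (Fin n) ℝ // A.det = 1} => systI A.1 i := by
  have hn : 1 ≤ n := h1.trans h2
  rw [continuous_iff_continuousAt]
  intro A₀
  set a : Matrix (Fin n) (Fin n) ℝ := A₀.1 with ha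
  set s : ℝ := systI a i with hs
  have hdet : a.det = 1 := A₀.2
  set c1 : {A : Matrix (Fin n) (Fin n) ℝ // A.det = 1} → ℝ :=
    fun B => ‖toEuclideanCLM (𝕜 := ℝ) (B.1 * a.adjugate)‖ with hc1def
  set c2 : {A : Matrix (Fin n) (Fin n) ℝ // A.det = 1} → ℝ :=
    fun B => ‖toEuclideanCLM (𝕜 := ℝ) (a * B.1.adjugate)‖ with hc2def
  have hc1cont : Continuous c1 :=
    cont_norm_clm.comp ((continuous_subtype_val.matrix_mul continuous_const))
  have hc2cont : Continuous c2 :=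
    cont_norm_clm.comp (continuous_const.matrix_mul continuous_subtype_val.matrix_adjugate)
  have hc1A : c1 A₀ = 1 := by
    rw [hc1def]
    simp only [← ha, Matrix.mul_adjugate, hdet, one_smul]
    exact norm_clm_one hn
  have hc2A : c2 A₀ = 1 := by
    rw [hc2def]
    simp only [← ha, Matrix.mul_adjugate, hdet, one_smul]
    exact norm_clm_one hn
  -- eventual positivity
  have hev1 : ∀ᶠ B in nhds A₀, 0 < c1 B := by
    have : {B | 0 < c1 B} ∈ nhds A₀ := by
      refine (hc1cont.tendsto A₀).eventually ?_
      rw [hc1A]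
      exact Filter.Tendsto.eventually_const_lt (by norm_num) Filter.tendsto_id
    exact this
  have hev2 : ∀ᶠ B in nhds A₀, 0 < c2 B := by
    have : {B | 0 < c2 B} ∈ nhds A₀ := by
      refine (hc2cont.tendsto A₀).eventually ?_
      rw [hc2A]
      exact Filter.Tendsto.eventually_const_lt (by norm_num) Filter.tendsto_id
    exact this
  -- key inequalities
  have hupper : ∀ B : {A : Matrix (Fin n) (Fin n) ℝ // A.det = 1}, 0 < c1 B →
      systI B.1 i ≤ c1 B * s := by
    intro B hB
    refine systI_le_mul a B.1 h1 h2 hB fun v => ?_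
    have hfac : B.1 = (B.1 * a.adjugate) * a := by
      rw [Matrix.mul_assoc, Matrix.adjugate_mul, hdet, one_smul, Matrix.mul_one]
    calc euclNorm (B.1.mulVec (intVec v))
        = euclNorm ((B.1 * a.adjugate).mulVec (a.mulVec (intVec v))) := by
          rw [Matrix.mulVec_mulVec, ← hfac]
      _ ≤ c1 B * euclNorm (a.mulVec (intVec v)) := enorm_mulVec_le _ _
  have hlower : ∀ B : {A : Matrix (Fin n) (Fin n) ℝ // A.det = 1}, 0 < c2 B →
      s ≤ c2 B * systI B.1 i := by
    intro B hB
    refine systI_le_mul B.1 a h1 h2 hB fun v => ?_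
    have hfac : a = (a * B.1.adjugate) * B.1 := by
      rw [Matrix.mul_assoc, Matrix.adjugate_mul, B.2, one_smul, Matrix.mul_one]
    calc euclNorm (a.mulVec (intVec v))
        = euclNorm ((a * B.1.adjugate).mulVec (B.1.mulVec (intVec v))) := by
          rw [Matrix.mulVec_mulVec, ← hfac]
      _ ≤ c2 B * euclNorm (B.1.mulVec (intVec v)) := enorm_mulVec_le _ _
  -- squeeze
  have htendlo : Filter.Tendsto (fun B => (c2 B)⁻¹ * s) (nhds A₀) (nhds s) := by
    have := ((hc2cont.tendsto A₀).inv₀ (by rw [hc2A]; norm_num)).mul_const s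
    rwa [hc2A, inv_one, one_mul] at this
  have htendhi : Filter.Tendsto (fun B => c1 B * s) (nhds A₀) (nhds s) := by
    have := (hc1cont.tendsto A₀).mul_const s
    rwa [hc1A, one_mul] at this
  refine tendsto_of_tendsto_of_tendsto_of_le_of_le' htendlo htendhi ?_ ?_
  · filter_upwards [hev2] with B hB
    rw [inv_mul_le_iff₀ hB]
    exact hlower B hB
  · filter_upwards [hev1] with B hB
    exact hupper B hB
end

section
/- With Φ_t as defined via the successive minima decomposition, if A ∈ SL_n(ℝ) is well-rounded (Λ₁(A) = ℝ^n) then Φ_t(A) = A for all t ≥ 0; and if A is not well-rounded then for every v ∈ Λ₁(A) ∩ ℤ^n, lim_{t→∞} |Φ_t(A)v| = 0. -/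
open Matrix Submodule Module

/-- The element of Euclidean space associated to a vector in `ℝⁿ`. -/
noncomputable def vecE {n : ℕ} (w : Fin n → ℝ) : EuclideanSpace ℝ (Fin n) :=
  (WithLp.equiv 2 (Fin n → ℝ)).symm w

/-- `Λ_i(A)` as a subspace of Euclidean space, with `Λ₀(A) = 0`. -/
noncomputable def LambdaE {n : ℕ} (A : Matrix (Fin n) (Fin n) ℝ) :
    ℕ → Submodule ℝ (EuclideanSpace ℝ (Fin n))
  | 0 => ⊥
  | (i + 1) => Submodule.span ℝ ((fun v : Fin n → ℤ => vecE (intVec v)) ''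
      {v : Fin n → ℤ | euclNorm (A.mulVec (intVec v)) ≤ systI A (i + 1)})

/-- `Θ_i(A) = (AΛ_{i-1}(A))^⊥ ∩ (AΛ_i(A))`. -/
noncomputable def ThetaE {n : ℕ} (A : Matrix (Fin n) (Fin n) ℝ) (i : ℕ) :
    Submodule ℝ (EuclideanSpace ℝ (Fin n)) :=
  ((LambdaE A (i - 1)).map (Matrix.toEuclideanLin A))ᗮ ⊓
    (LambdaE A i).map (Matrix.toEuclideanLin A)

/-- The normalization factor `c(A,t) = (∏ᵢ systᵢ(A)^{t·dim Θᵢ(A)})^{1/n}`. -/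
noncomputable def cNorm {n : ℕ} (A : Matrix (Fin n) (Fin n) ℝ) (t : ℝ) : ℝ :=
  (∏ i ∈ Finset.Icc 1 n,
      systI A i ^ (t * (Module.finrank ℝ (ThetaE A i) : ℝ))) ^ ((1 : ℝ) / n)

/-- The linear map `Φ_t(A) : x ↦ c(A,t)⁻¹ ∑ᵢ systᵢ(A)^t π_{Θᵢ(A)}(Ax)`. -/
noncomputable def PhiLin {n : ℕ} (A : Matrix (Fin n) (Fin n) ℝ) (t : ℝ) :
    EuclideanSpace ℝ (Fin n) →ₗ[ℝ] EuclideanSpace ℝ (Fin n) :=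
  (cNorm A t)⁻¹ • ∑ i ∈ Finset.Icc 1 n, systI A i ^ t •
    ((ThetaE A i).subtype ∘ₗ (orthogonalProjection (ThetaE A i)).toLinearMap ∘ₗ
      Matrix.toEuclideanLin A)

namespace Stmt17Aux
open Matrix Submodule Module Filter

variable {n : ℕ}

lemma vecE_apply (w : Fin n → ℝ) (i : Fin n) : vecE w i = w i := rfl

lemma enorm_eq_norm (w : Fin n → ℝ) : euclNorm w = ‖vecE w‖ := by
  rw [euclNorm, EuclideanSpace.norm_eq]
  congr 1
  apply Finset.sum_congr rfl
  intro i _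
  simp [vecE_apply, Real.norm_eq_abs, sq_abs]

lemma enorm_nonneg' (w : Fin n → ℝ) : 0 ≤ euclNorm w := Real.sqrt_nonneg _

lemma toEL_vecE (M : Matrix (Fin n) (Fin n) ℝ) (w : Fin n → ℝ) :
    Matrix.toEuclideanLin M (vecE w) = vecE (M.mulVec w) := rfl

lemma abs_le_enorm (w : Fin n → ℝ) (i : Fin n) : |w i| ≤ euclNorm w := by
  rw [euclNorm, ← Real.sqrt_sq_eq_abs]
  exact Real.sqrt_le_sqrt (Finset.single_le_sum (fun j _ => sq_nonneg (w j)) (Finset.mem_univ i))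

lemma one_le_enorm_intVec {v : Fin n → ℤ} (hv : v ≠ 0) : 1 ≤ euclNorm (intVec v) := by
  obtain ⟨i, hi⟩ : ∃ i, v i ≠ 0 := by
    by_contra h; push_neg at h; exact hv (funext h)
  calc (1:ℝ) ≤ |(v i : ℝ)| := by
        rw [← Int.cast_abs]
        exact_mod_cast Int.one_le_abs hi
  _ ≤ euclNorm (intVec v) := abs_le_enorm (intVec v) i

end Stmt17Aux

variable {n : ℕ}
open Matrix Submodule Module Filter Stmt17Aux

namespace Stmt17Aux

lemma exists_lb (M N : Matrix (Fin n) (Fin n) ℝ) (hNM : N * M = 1) :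
    ∃ c : ℝ, 0 < c ∧ ∀ v : Fin n → ℤ, v ≠ 0 → c ≤ euclNorm (M.mulVec (intVec v)) := by
  set g := LinearMap.toContinuousLinearMap (Matrix.toEuclideanLin N) with hg
  have hgmax : (0:ℝ) < max ‖g‖ 1 := lt_of_lt_of_le one_pos (le_max_right _ _)
  refine ⟨(max ‖g‖ 1)⁻¹, inv_pos.mpr hgmax, ?_⟩
  intro v hv
  have h1 : 1 ≤ euclNorm (intVec v) := one_le_enorm_intVec hv
  have h2 : euclNorm (intVec v) ≤ ‖g‖ * euclNorm (M.mulVec (intVec v)) := by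
    rw [enorm_eq_norm, enorm_eq_norm]
    have hx : vecE (intVec v) = g (vecE (M.mulVec (intVec v))) := by
      show vecE (intVec v) = Matrix.toEuclideanLin N (vecE (M.mulVec (intVec v)))
      rw [toEL_vecE, Matrix.mulVec_mulVec, hNM, Matrix.one_mulVec]
    rw [hx]; exact g.le_opNorm _
  have h3 : 1 ≤ max ‖g‖ 1 * euclNorm (M.mulVec (intVec v)) := by
    refine h1.trans (h2.trans ?_)
    exact mul_le_mul_of_nonneg_right (le_max_left _ _) (enorm_nonneg' _)
  calc (max ‖g‖ 1)⁻¹ = (max ‖g‖ 1)⁻¹ * 1 := (mul_one _).symm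
    _ ≤ (max ‖g‖ 1)⁻¹ * (max ‖g‖ 1 * euclNorm (M.mulVec (intVec v))) := by
        exact mul_le_mul_of_nonneg_left h3 (inv_pos.mpr hgmax).le
    _ = euclNorm (M.mulVec (intVec v)) := by rw [← mul_assoc, inv_mul_cancel₀ hgmax.ne', one_mul]

lemma finite_le (M N : Matrix (Fin n) (Fin n) ℝ) (hNM : N * M = 1) (R : ℝ) :
    {v : Fin n → ℤ | euclNorm (M.mulVec (intVec v)) ≤ R}.Finite := by
  set g := LinearMap.toContinuousLinearMap (Matrix.toEuclideanLin N) with hg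
  set C : ℤ := ⌈‖g‖ * R⌉ with hC
  apply Set.Finite.subset (Set.Finite.pi (fun i : Fin n => Set.finite_Icc (-C) C))
  intro v hv
  have key : ∀ i, |(v i : ℝ)| ≤ ‖g‖ * R := by
    intro i
    have h2 : euclNorm (intVec v) ≤ ‖g‖ * euclNorm (M.mulVec (intVec v)) := by
      rw [enorm_eq_norm, enorm_eq_norm]
      have hx : vecE (intVec v) = g (vecE (M.mulVec (intVec v))) := by
        show vecE (intVec v) = Matrix.toEuclideanLin N (vecE (M.mulVec (intVec v)))
        rw [toEL_vecE, Matrix.mulVec_mulVec, hNM, Matrix.one_mulVec]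
      rw [hx]; exact g.le_opNorm _
    refine (abs_le_enorm (intVec v) i).trans (h2.trans ?_)
    exact mul_le_mul_of_nonneg_left hv (norm_nonneg _)
  intro i _
  have hi := key i
  rw [abs_le] at hi
  constructor
  · have : (-C : ℝ) ≤ (v i : ℝ) := by
      refine le_trans ?_ hi.1
      simp only [hC, neg_le_neg_iff]
      exact Int.le_ceil _
    exact_mod_cast this
  · have : (v i : ℝ) ≤ (C : ℝ) := hi.2.trans (Int.le_ceil _)
    exact_mod_cast this

end Stmt17Aux

namespace Stmt17Aux
open Matrix Submodule Module Filter

variable {n : ℕ}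

/-- The defining set of `systI`. -/
def SI (M : Matrix (Fin n) (Fin n) ℝ) (i : ℕ) : Set ℝ :=
  {r : ℝ | i ≤ finrank ℝ (span ℝ
    (intVec '' {v : Fin n → ℤ | euclNorm (M.mulVec (intVec v)) < r}))}

lemma systI_eq_sInf (M : Matrix (Fin n) (Fin n) ℝ) (i : ℕ) : systI M i = sInf (SI M i) := rfl

lemma SI_mem_mono (M : Matrix (Fin n) (Fin n) ℝ) {i : ℕ} {r r' : ℝ}
    (h : r ∈ SI M i) (hrr : r ≤ r') : r' ∈ SI M i :=
  le_trans h (Submodule.finrank_mono (span_mono (Set.image_mono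
    (fun v hv => lt_of_lt_of_le hv hrr))))

lemma exists_big (M : Matrix (Fin n) (Fin n) ℝ) : ∃ r0 : ℝ, ∀ i : ℕ, i ≤ n → r0 ∈ SI M i := by
  set r0 : ℝ := (∑ j : Fin n, euclNorm (M.mulVec (intVec (Pi.single j 1)))) + 1 with hr0
  refine ⟨r0, fun i hi => ?_⟩
  have hsingle : ∀ j : Fin n, (Pi.single j 1 : Fin n → ℝ) ∈ span ℝ
      (intVec '' {v : Fin n → ℤ | euclNorm (M.mulVec (intVec v)) < r0}) := by
    intro j
    apply subset_span
    refine ⟨Pi.single j 1, ?_, ?_⟩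
    · show euclNorm _ < r0
      rw [hr0]
      have := Finset.single_le_sum
        (f := fun j => euclNorm (M.mulVec (intVec (Pi.single j 1))))
        (fun k _ => enorm_nonneg' _) (Finset.mem_univ j)
      linarith
    · funext k
      simp [intVec, Pi.single_apply]
  have htop : span ℝ (intVec '' {v : Fin n → ℤ | euclNorm (M.mulVec (intVec v)) < r0}) = ⊤ := by
    rw [eq_top_iff, ← (Pi.basisFun ℝ (Fin n)).span_eq]
    apply span_le.mpr
    rintro x ⟨j, rfl⟩
    simpa using hsingle j
  show i ≤ finrank ℝ _
  rw [htop, finrank_top]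
  simpa [Module.finrank_fin_fun] using hi

lemma lb_SI {M : Matrix (Fin n) (Fin n) ℝ} {c : ℝ}
    (hc : ∀ v : Fin n → ℤ, v ≠ 0 → c ≤ euclNorm (M.mulVec (intVec v)))
    {i : ℕ} (hi : 1 ≤ i) {r : ℝ} (hr : r ∈ SI M i) : c ≤ r := by
  by_contra hcr
  push_neg at hcr
  have hsub : ∀ v : Fin n → ℤ, euclNorm (M.mulVec (intVec v)) < r → v = 0 := by
    intro v hv
    by_contra hv0
    exact absurd ((hc v hv0).trans_lt hv) (not_lt.mpr hcr.le)
  have h0 : span ℝ (intVec '' {v : Fin n → ℤ | euclNorm (M.mulVec (intVec v)) < r}) = ⊥ := by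
    rw [span_eq_bot]
    rintro x ⟨v, hv, rfl⟩
    rw [hsub v hv]
    funext k; simp [intVec]
  have h2 := hr
  simp only [SI, Set.mem_setOf_eq] at h2
  rw [h0, finrank_bot] at h2
  omega

section D
variable {n : ℕ} {M N : Matrix (Fin n) (Fin n) ℝ} {c : ℝ}
  (hNM : N * M = 1) (hc0 : 0 < c)
  (hc : ∀ v : Fin n → ℤ, v ≠ 0 → c ≤ euclNorm (M.mulVec (intVec v)))

include hc

lemma SI_bddBelow {i : ℕ} (hi : 1 ≤ i) : BddBelow (SI M i) :=
  ⟨c, fun _ hr => lb_SI hc hi hr⟩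

lemma le_systI {i : ℕ} (hi : 1 ≤ i) (hin : i ≤ n) : c ≤ systI M i := by
  obtain ⟨r0, hr0⟩ := exists_big M
  exact le_csInf ⟨r0, hr0 i hin⟩ (fun r hr => lb_SI hc hi hr)

lemma systI_mono {i j : ℕ} (hi : 1 ≤ i) (hij : i ≤ j) (hj : j ≤ n) :
    systI M i ≤ systI M j := by
  obtain ⟨r0, hr0⟩ := exists_big M
  exact csInf_le_csInf (SI_bddBelow hc hi) ⟨r0, hr0 j hj⟩
    (fun r hr => le_trans hij hr)

include hNM in
lemma exists_gap (s : ℝ) :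
    ∃ r : ℝ, s < r ∧ ∀ v : Fin n → ℤ, euclNorm (M.mulVec (intVec v)) < r →
      euclNorm (M.mulVec (intVec v)) ≤ s := by
  have hfin : ({v : Fin n → ℤ | euclNorm (M.mulVec (intVec v)) ≤ s + 1}).Finite :=
    finite_le M N hNM (s + 1)
  set T : Set ℝ := (fun v => euclNorm (M.mulVec (intVec v))) ''
    {v : Fin n → ℤ | euclNorm (M.mulVec (intVec v)) ≤ s + 1 ∧ s < euclNorm (M.mulVec (intVec v))}
    with hT
  have hTfin : T.Finite := Set.Finite.image _ (hfin.subset (fun v hv => hv.1))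
  rcases T.eq_empty_or_nonempty with hTe | hTne
  · refine ⟨s + 1, by linarith, fun v hv => ?_⟩
    by_contra h
    push_neg at h
    have : euclNorm (M.mulVec (intVec v)) ∈ T := ⟨v, ⟨hv.le, h⟩, rfl⟩
    rw [hTe] at this
    exact this
  · have hmem : sInf T ∈ T := hTne.csInf_mem hTfin
    have hsm : s < sInf T := by
      obtain ⟨v, hv, hve⟩ := hmem
      rw [← hve]; exact hv.2
    refine ⟨min (sInf T) (s + 1), lt_min hsm (by linarith), fun v hv => ?_⟩
    by_contra h
    push_neg at h
    have hvT : euclNorm (M.mulVec (intVec v)) ∈ T :=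
      ⟨v, ⟨(hv.trans_le (min_le_right _ _)).le, h⟩, rfl⟩
    have := csInf_le hTfin.bddBelow hvT
    have := hv.trans_le (min_le_left _ _)
    linarith

include hNM in
lemma attain {i : ℕ} (h1 : 1 ≤ i) (hin : i ≤ n) :
    i ≤ finrank ℝ (span ℝ
      (intVec '' {v : Fin n → ℤ | euclNorm (M.mulVec (intVec v)) ≤ systI M i})) := by
  obtain ⟨r, hr1, hr2⟩ := exists_gap hNM hc (systI M i)
  obtain ⟨r0, hr0⟩ := exists_big M
  have hne : (SI M i).Nonempty := ⟨r0, hr0 i hin⟩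
  obtain ⟨r', hr', hr'lt⟩ := exists_lt_of_csInf_lt hne hr1
  have hrSI : r ∈ SI M i := SI_mem_mono M hr' hr'lt.le
  refine le_trans hrSI (Submodule.finrank_mono (span_mono (Set.image_mono ?_)))
  exact fun v hv => hr2 v hv

end D

variable {n : ℕ}

/-- The `WithLp` linear equivalence. -/
noncomputable def eL (n : ℕ) : (Fin n → ℝ) ≃ₗ[ℝ] EuclideanSpace ℝ (Fin n) :=
  (WithLp.linearEquiv 2 ℝ (Fin n → ℝ)).symm

lemma eL_apply (w : Fin n → ℝ) : eL n w = vecE w := rfl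

lemma intVec_zero : intVec (0 : Fin n → ℤ) = 0 := by
  funext k; simp [intVec]

lemma intVec_ne_zero {v : Fin n → ℤ} (hv : v ≠ 0) : intVec v ≠ 0 := by
  intro h
  apply hv
  funext k
  have := congrFun h k
  simpa [intVec] using this

lemma LambdaE_succ (M : Matrix (Fin n) (Fin n) ℝ) (i : ℕ) :
    LambdaE M (i + 1) = Submodule.map (eL n : (Fin n → ℝ) →ₗ[ℝ] EuclideanSpace ℝ (Fin n))
      (span ℝ (intVec '' {v : Fin n → ℤ | euclNorm (M.mulVec (intVec v)) ≤ systI M (i + 1)})) := by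
  rw [LambdaE, ← Submodule.span_image, Set.image_image]
  rfl

lemma finrank_LambdaE_succ (M : Matrix (Fin n) (Fin n) ℝ) (i : ℕ) :
    finrank ℝ (LambdaE M (i + 1)) = finrank ℝ
      (span ℝ (intVec '' {v : Fin n → ℤ | euclNorm (M.mulVec (intVec v)) ≤ systI M (i + 1)})) := by
  rw [LambdaE_succ]
  exact LinearEquiv.finrank_map_eq (eL n) _

section E
variable {M : Matrix (Fin n) (Fin n) ℝ} {c : ℝ}
  (hc0 : 0 < c)
  (hc : ∀ v : Fin n → ℤ, v ≠ 0 → c ≤ euclNorm (M.mulVec (intVec v)))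

include hc in
lemma LambdaE_mono ⦃i j : ℕ⦄ (hij : i ≤ j) (hj : j ≤ n) : LambdaE M i ≤ LambdaE M j := by
  cases i with
  | zero => exact bot_le
  | succ i' =>
    cases j with
    | zero => exact absurd hij (by omega)
    | succ j' =>
      apply span_mono
      apply Set.image_mono
      intro v hv
      exact le_trans hv (systI_mono hc (by omega) hij hj)

omit hc in
lemma SI_one (M : Matrix (Fin n) (Fin n) ℝ) :
    SI M 1 = {r : ℝ | ∃ v : Fin n → ℤ, v ≠ 0 ∧ euclNorm (M.mulVec (intVec v)) < r} := by
  ext r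
  simp only [SI, Set.mem_setOf_eq]
  constructor
  · intro h
    by_contra hex
    push_neg at hex
    have h0 : span ℝ (intVec '' {v : Fin n → ℤ | euclNorm (M.mulVec (intVec v)) < r}) = ⊥ := by
      rw [span_eq_bot]
      rintro x ⟨v, hv, rfl⟩
      by_cases hv0 : v = 0
      · subst hv0; exact intVec_zero
      · exact absurd hv (not_lt.mpr (hex v hv0))
    rw [h0, finrank_bot] at h
    omega
  · rintro ⟨v, hv0, hvr⟩
    have hx : intVec v ∈ span ℝ (intVec '' {v : Fin n → ℤ | euclNorm (M.mulVec (intVec v)) < r}) :=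
      subset_span ⟨v, hvr, rfl⟩
    have hxne : intVec v ≠ 0 := intVec_ne_zero hv0
    have hpos : 0 < finrank ℝ
        (span ℝ (intVec '' {v : Fin n → ℤ | euclNorm (M.mulVec (intVec v)) < r})) := by
      rw [Module.finrank_pos_iff_exists_ne_zero]
      exact ⟨⟨intVec v, hx⟩, fun h => hxne (congrArg Subtype.val h)⟩
    omega

include hc in
lemma systI_one_eq_syst1 (hn : 0 < n) : systI M 1 = syst1 M := by
  have hSI := SI_one M
  set Nset : Set ℝ :=
    {r : ℝ | ∃ v : Fin n → ℤ, v ≠ 0 ∧ euclNorm (M.mulVec (intVec v)) = r} with hNset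
  have hNne : Nset.Nonempty := by
    refine ⟨euclNorm (M.mulVec (intVec (Pi.single ⟨0, hn⟩ 1))), ⟨Pi.single ⟨0, hn⟩ 1, ?_, rfl⟩⟩
    intro h
    have := congrFun h ⟨0, hn⟩
    simp [Pi.single_apply] at this
  have hNbdd : BddBelow Nset := ⟨c, by rintro r ⟨v, hv, rfl⟩; exact hc v hv⟩
  obtain ⟨r0, hr0⟩ := exists_big M
  have hmain : sInf (SI M 1) = sInf Nset := by
    apply le_antisymm
    · apply le_of_forall_gt_imp_ge_of_dense
      intro b hb
      obtain ⟨x, hxN, hxb⟩ := exists_lt_of_csInf_lt hNne hb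
      obtain ⟨v, hv0, hve⟩ := hxN
      have hbSI : b ∈ SI M 1 := by
        rw [hSI]; exact ⟨v, hv0, by rw [hve]; exact hxb⟩
      exact csInf_le (SI_bddBelow hc le_rfl) hbSI
    · apply le_csInf ⟨r0, hr0 1 hn⟩
      intro r hr
      rw [hSI] at hr
      obtain ⟨v, hv0, hvr⟩ := hr
      exact le_trans (csInf_le hNbdd ⟨v, hv0, rfl⟩) hvr.le
  exact hmain

include hc in
lemma syst1_le_enorm {v : Fin n → ℤ} (hv : v ≠ 0) :
    syst1 M ≤ euclNorm (M.mulVec (intVec v)) := by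
  apply csInf_le ⟨c, by rintro r ⟨w, hw, rfl⟩; exact hc w hw⟩
  exact ⟨v, hv, rfl⟩

include hc hc0 in
lemma level_set_eq (hn : 0 < n) :
    {v : Fin n → ℤ | euclNorm (M.mulVec (intVec v)) ≤ systI M 1} = insert 0 (S1 M) := by
  ext v
  simp only [Set.mem_setOf_eq, Set.mem_insert_iff]
  constructor
  · intro hv
    by_cases hv0 : v = 0
    · left; exact hv0
    · right
      refine ⟨hv0, le_antisymm ?_ ?_⟩
      · rw [← systI_one_eq_syst1 hc hn]; exact hv
      · exact syst1_le_enorm hc hv0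
  · rintro (rfl | ⟨hv0, hve⟩)
    · have : euclNorm (M.mulVec (intVec (0 : Fin n → ℤ))) = 0 := by
        rw [intVec_zero, Matrix.mulVec_zero]
        simp [euclNorm]
      rw [this]
      exact le_trans hc0.le (le_systI hc le_rfl hn)
    · rw [hve, systI_one_eq_syst1 hc hn]

include hc hc0 in
lemma lambdaE_one_eq (hn : 0 < n) :
    LambdaE M 1 = Submodule.map (eL n : (Fin n → ℝ) →ₗ[ℝ] EuclideanSpace ℝ (Fin n))
      (span ℝ (intVec '' S1 M)) := by
  have h1 : (1 : ℕ) = 0 + 1 := rfl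
  rw [h1, LambdaE_succ]
  congr 1
  rw [level_set_eq hc0 hc hn, Set.image_insert_eq, intVec_zero, span_insert_zero]

include hc hc0 in
lemma wellRounded_iff (hn : 0 < n) : WellRounded M ↔ LambdaE M 1 = ⊤ := by
  rw [lambdaE_one_eq hc0 hc hn]
  unfold WellRounded
  have hmt : Submodule.map (eL n : (Fin n → ℝ) →ₗ[ℝ] EuclideanSpace ℝ (Fin n))
      (⊤ : Submodule ℝ (Fin n → ℝ)) = ⊤ := by
    rw [Submodule.map_top, LinearMap.range_eq_top]
    exact (eL n).surjective
  constructor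
  · intro h; rw [h]; exact hmt
  · intro h
    exact Submodule.map_injective_of_injective (f := (eL n : (Fin n → ℝ) →ₗ[ℝ] EuclideanSpace ℝ (Fin n))) (eL n).injective (h.trans hmt.symm)

end E

section F
variable {n : ℕ} {M N : Matrix (Fin n) (Fin n) ℝ} {c : ℝ}

lemma toEL_cancel_left (hNM : N * M = 1) (x : EuclideanSpace ℝ (Fin n)) :
    Matrix.toEuclideanLin N (Matrix.toEuclideanLin M x) = x := by
  rw [Matrix.toEuclideanLin_apply, Matrix.toEuclideanLin_apply]
  simp [Matrix.mulVec_mulVec, hNM, Matrix.one_mulVec]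

lemma toEL_inj (hNM : N * M = 1) : Function.Injective (Matrix.toEuclideanLin M) := by
  intro x y h
  have h2 := congrArg (Matrix.toEuclideanLin N) h
  rwa [toEL_cancel_left hNM, toEL_cancel_left hNM] at h2

lemma toEL_surj (hMN : M * N = 1) : Function.Surjective (Matrix.toEuclideanLin M) :=
  fun y => ⟨Matrix.toEuclideanLin N y, toEL_cancel_left (M := N) (N := M) hMN y⟩

/-- `toEuclideanLin` of an invertible matrix, as a linear equivalence. -/
noncomputable def toELequiv (M N : Matrix (Fin n) (Fin n) ℝ) (hMN : M * N = 1)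
    (hNM : N * M = 1) : EuclideanSpace ℝ (Fin n) ≃ₗ[ℝ] EuclideanSpace ℝ (Fin n) :=
  LinearEquiv.ofBijective (Matrix.toEuclideanLin M) ⟨toEL_inj hNM, toEL_surj hMN⟩

lemma finrank_map_toEL (hMN : M * N = 1) (hNM : N * M = 1)
    (p : Submodule ℝ (EuclideanSpace ℝ (Fin n))) :
    finrank ℝ (p.map (Matrix.toEuclideanLin M)) = finrank ℝ p :=
  LinearEquiv.finrank_map_eq (toELequiv M N hMN hNM) p

lemma map_toEL_top (hMN : M * N = 1) :
    (⊤ : Submodule ℝ (EuclideanSpace ℝ (Fin n))).map (Matrix.toEuclideanLin M) = ⊤ := by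
  rw [Submodule.map_top, LinearMap.range_eq_top]
  exact toEL_surj hMN

variable (hMN : M * N = 1) (hNM : N * M = 1) (hc0 : 0 < c)
  (hc : ∀ v : Fin n → ℤ, v ≠ 0 → c ≤ euclNorm (M.mulVec (intVec v)))

include hNM hc in
lemma LambdaE_n_top (hn : 0 < n) : LambdaE M n = ⊤ := by
  obtain ⟨m, rfl⟩ : ∃ m, n = m + 1 := ⟨n - 1, by omega⟩
  apply Submodule.eq_top_of_finrank_eq
  have h1 : m + 1 ≤ finrank ℝ (LambdaE M (m + 1)) := by
    rw [finrank_LambdaE_succ]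
    exact attain hNM hc (by omega) le_rfl
  have h2 : finrank ℝ (LambdaE M (m + 1)) ≤ m + 1 :=
    (Submodule.finrank_le _).trans_eq finrank_euclideanSpace_fin
  rw [finrank_euclideanSpace_fin]
  omega

include hc in
lemma g_step {i : ℕ} (h1 : 1 ≤ i) (hin : i ≤ n) :
    finrank ℝ ((LambdaE M (i - 1)).map (Matrix.toEuclideanLin M)) + finrank ℝ (ThetaE M i)
      = finrank ℝ ((LambdaE M i).map (Matrix.toEuclideanLin M)) := by
  unfold ThetaE
  apply Submodule.finrank_add_inf_finrank_orthogonal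
  exact Submodule.map_mono (LambdaE_mono hc (by omega) hin)

lemma LambdaE_zero : LambdaE M 0 = ⊥ := rfl

include hMN hNM hc in
lemma sum_d (hn : 0 < n) :
    ∑ i ∈ Finset.Icc 1 n, finrank ℝ (ThetaE M i) = n := by
  have hstep : ∀ i : ℕ, i < n →
      finrank ℝ ((LambdaE M i).map (Matrix.toEuclideanLin M)) + finrank ℝ (ThetaE M (i + 1))
        = finrank ℝ ((LambdaE M (i + 1)).map (Matrix.toEuclideanLin M)) := by
    intro i hi
    have h := g_step hc (i := i + 1) (by omega) (by omega)
    simpa using h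
  have key : ∀ m : ℕ, m ≤ n → ∑ i ∈ Finset.range m, finrank ℝ (ThetaE M (1 + i))
      = finrank ℝ ((LambdaE M m).map (Matrix.toEuclideanLin M)) := by
    intro m
    induction m with
    | zero =>
      intro _
      rw [Finset.sum_range_zero, LambdaE_zero, Submodule.map_bot, finrank_bot]
    | succ k ih =>
      intro hk
      rw [Finset.sum_range_succ, ih (by omega), add_comm 1 k, hstep k (by omega)]
  rw [← Finset.Ico_add_one_right_eq_Icc, Finset.sum_Ico_eq_sum_range]
  have hn1 : n + 1 - 1 = n := by omega
  rw [hn1, key n le_rfl, LambdaE_n_top hNM hc hn, map_toEL_top hMN, finrank_top,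
    finrank_euclideanSpace_fin]

lemma Theta_one : ThetaE M 1 = (LambdaE M 1).map (Matrix.toEuclideanLin M) := by
  unfold ThetaE
  rw [show (1:ℕ) - 1 = 0 from rfl, LambdaE_zero, Submodule.map_bot,
    Submodule.bot_orthogonal_eq_top, top_inf_eq]

include hMN hNM hc0 hc in
lemma exists_k (hn : 0 < n) (hwr : ¬ WellRounded M) :
    ∃ k ∈ Finset.Icc 1 n, 0 < finrank ℝ (ThetaE M k) ∧ systI M 1 < systI M k := by
  by_contra hcon
  push_neg at hcon
  have hd0 : ∀ k, 2 ≤ k → k ≤ n → finrank ℝ (ThetaE M k) = 0 := by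
    intro k hk2 hkn
    by_contra hdk
    have hdk' : 0 < finrank ℝ (ThetaE M k) := Nat.pos_of_ne_zero hdk
    have hsk := hcon k (Finset.mem_Icc.mpr ⟨by omega, hkn⟩) hdk'
    have hsk' : systI M k = systI M 1 :=
      le_antisymm hsk (systI_mono hc le_rfl (by omega) hkn)
    obtain ⟨k', rfl⟩ : ∃ k', k = k' + 1 := ⟨k - 1, by omega⟩
    have hLk : LambdaE M (k' + 1) = LambdaE M 1 := by
      have h1 : LambdaE M 1 = LambdaE M (0 + 1) := rfl
      rw [h1]
      simp only [LambdaE]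
      rw [hsk']
    have e1 : LambdaE M k' ≤ LambdaE M (k' + 1) := LambdaE_mono hc (by omega) hkn
    have e2 : LambdaE M (k' + 1) ≤ LambdaE M k' :=
      hLk.le.trans (LambdaE_mono hc (by omega) (by omega))
    have heq : (LambdaE M k').map (Matrix.toEuclideanLin M)
        = (LambdaE M (k' + 1)).map (Matrix.toEuclideanLin M) :=
      congrArg _ (le_antisymm e1 e2)
    have hTk : ThetaE M (k' + 1) = (⊥ : Submodule ℝ (EuclideanSpace ℝ (Fin n))) := by
      unfold ThetaE
      rw [show k' + 1 - 1 = k' from rfl, heq, inf_comm,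
        (Submodule.orthogonal_disjoint _).eq_bot]
    rw [hTk, finrank_bot] at hdk'
    omega
  have hsum := sum_d hMN hNM hc hn
  rw [Finset.Icc_eq_cons_Ioc hn, Finset.sum_cons] at hsum
  have hzero : ∑ i ∈ Finset.Ioc 1 n, finrank ℝ (ThetaE M i) = 0 :=
    Finset.sum_eq_zero (fun k hk => by
      have := Finset.mem_Ioc.mp hk
      exact hd0 k (by omega) this.2)
  have hlt : finrank ℝ (ThetaE M 1) < n := by
    rw [Theta_one, finrank_map_toEL hMN hNM]
    have hne : LambdaE M 1 ≠ ⊤ := fun h => hwr ((wellRounded_iff hc0 hc hn).mpr h)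
    have hle : finrank ℝ (LambdaE M 1) ≤ n :=
      (Submodule.finrank_le _).trans_eq finrank_euclideanSpace_fin
    rcases lt_or_eq_of_le hle with h | h
    · exact h
    · exact absurd (Submodule.eq_top_of_finrank_eq
        (h.trans finrank_euclideanSpace_fin.symm)) hne
  simp only [hzero, add_zero] at hsum
  have hfix : finrank ℝ (ThetaE M (Nat.succ 0)) = finrank ℝ (ThetaE M 1) := rfl
  rw [hfix] at hsum
  omega

end F

lemma prod_rpow_lt {n : ℕ} (hn : 0 < n) (s : ℕ → ℝ) (d : ℕ → ℕ)
    (hpos : ∀ i ∈ Finset.Icc 1 n, 0 < s i)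
    (hle : ∀ i ∈ Finset.Icc 1 n, s 1 ≤ s i)
    (hsum : ∑ i ∈ Finset.Icc 1 n, d i = n)
    (hex : ∃ k ∈ Finset.Icc 1 n, 0 < d k ∧ s 1 < s k) :
    s 1 < ∏ i ∈ Finset.Icc 1 n, s i ^ ((d i : ℝ) / n) := by
  have h1n : (0:ℝ) < (n:ℝ) := by exact_mod_cast hn
  have hs1 : 0 < s 1 := hpos 1 (Finset.mem_Icc.mpr ⟨le_rfl, hn⟩)
  have hQlt : s 1 ^ n < ∏ i ∈ Finset.Icc 1 n, s i ^ (d i) := by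
    conv_lhs => rw [← hsum]
    rw [← Finset.prod_pow_eq_pow_sum]
    apply Finset.prod_lt_prod
    · exact fun i hi => pow_pos hs1 _
    · exact fun i hi => pow_le_pow_left₀ hs1.le (hle i hi) _
    · obtain ⟨k, hk, hdk, hsk⟩ := hex
      exact ⟨k, hk, pow_lt_pow_left₀ hsk hs1.le (by omega)⟩
  have hstep : ∀ i ∈ Finset.Icc 1 n, s i ^ ((d i : ℝ) / n) = (s i ^ (d i)) ^ ((1:ℝ) / n) := by
    intro i hi
    rw [← Real.rpow_natCast (s i) (d i), ← Real.rpow_mul (hpos i hi).le]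
    congr 1
    rw [mul_one_div]
  rw [Finset.prod_congr rfl hstep,
    Real.finset_prod_rpow _ _ (fun i hi => pow_nonneg (hpos i hi).le _) _]
  have hlhs : s 1 = (s 1 ^ n) ^ ((1:ℝ) / n) := by
    rw [← Real.rpow_natCast (s 1) n, ← Real.rpow_mul hs1.le, mul_one_div,
      div_self h1n.ne', Real.rpow_one]
  rw [hlhs]
  exact Real.rpow_lt_rpow (pow_nonneg hs1.le n) hQlt (by positivity)

lemma tendsto_q_mul_K {q K : ℝ} (hq0 : 0 ≤ q) (hq1 : q < 1) :
    Filter.Tendsto (fun t : ℝ => q ^ t * K) Filter.atTop (nhds 0) := by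
  have h := tendsto_rpow_atTop_of_base_lt_one q (by linarith) hq1
  have h2 := h.mul_const K
  simpa using h2

end Stmt17Aux

open Stmt17Aux Filter

/-- if `A` is well-rounded then `Φ_t(A) = A` for all `t ≥ 0`; if `A` is
not well-rounded then `|Φ_t(A)v| → 0` as `t → ∞` for every integer vector `v ∈ Λ₁(A)`. -/
theorem stmt17 (n : ℕ) (hn : 0 < n) (A : Matrix.SpecialLinearGroup (Fin n) ℝ) :
    (WellRounded (A : Matrix (Fin n) (Fin n) ℝ) →
      ∀ t : ℝ, 0 ≤ t →
        PhiLin (A : Matrix (Fin n) (Fin n) ℝ) t =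
          Matrix.toEuclideanLin (A : Matrix (Fin n) (Fin n) ℝ)) ∧
    (¬ WellRounded (A : Matrix (Fin n) (Fin n) ℝ) →
      ∀ v : Fin n → ℤ, vecE (intVec v) ∈ LambdaE (A : Matrix (Fin n) (Fin n) ℝ) 1 →
        Filter.Tendsto
          (fun t : ℝ => ‖PhiLin (A : Matrix (Fin n) (Fin n) ℝ) t (vecE (intVec v))‖)
          Filter.atTop (nhds 0)) := by
  set M : Matrix (Fin n) (Fin n) ℝ := (A : Matrix (Fin n) (Fin n) ℝ) with hMdef
  set N : Matrix (Fin n) (Fin n) ℝ :=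
    ((A⁻¹ : Matrix.SpecialLinearGroup (Fin n) ℝ) : Matrix (Fin n) (Fin n) ℝ) with hNdef
  have hMN : M * N = 1 := by
    rw [hMdef, hNdef, ← Matrix.SpecialLinearGroup.coe_mul, mul_inv_cancel,
      Matrix.SpecialLinearGroup.coe_one]
  have hNM : N * M = 1 := by
    rw [hMdef, hNdef, ← Matrix.SpecialLinearGroup.coe_mul, inv_mul_cancel,
      Matrix.SpecialLinearGroup.coe_one]
  obtain ⟨c, hc0, hc⟩ := exists_lb M N hNM
  have hs1pos : 0 < systI M 1 := lt_of_lt_of_le hc0 (le_systI hc le_rfl hn)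
  constructor
  · -- Part 1 : well-rounded
    intro hwr t _
    have hL1 : LambdaE M 1 = ⊤ := (wellRounded_iff hc0 hc hn).mp hwr
    have hLi : ∀ i : ℕ, 1 ≤ i → i ≤ n → LambdaE M i = ⊤ := by
      intro i h1 h2
      exact top_unique (hL1 ▸ LambdaE_mono hc h1 h2)
    have hmapT := map_toEL_top (M := M) (N := N) hMN
    have hTheta1 : ThetaE M 1 = ⊤ := by
      rw [Theta_one, hL1, hmapT]
    have hThetai : ∀ i : ℕ, 2 ≤ i → i ≤ n → ThetaE M i = ⊥ := by
      intro i h2 hin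
      unfold ThetaE
      rw [hLi (i - 1) (by omega) (by omega), hmapT,
        Submodule.top_orthogonal_eq_bot, bot_inf_eq]
    have hcN : cNorm M t = systI M 1 ^ t := by
      unfold cNorm
      rw [Finset.prod_eq_single 1 ?f ?g]
      case f =>
        intro b hb hb1
        have hb' := Finset.mem_Icc.mp hb
        rw [hThetai b (by omega) hb'.2, finrank_bot]
        norm_num
      case g =>
        intro h
        exact absurd (Finset.mem_Icc.mpr ⟨le_rfl, hn⟩) h
      have hnne : (n:ℝ) ≠ 0 := by positivity
      rw [hTheta1, finrank_top, finrank_euclideanSpace_fin, ← Real.rpow_mul hs1pos.le]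
      congr 1
      field_simp
    unfold PhiLin
    rw [hcN]
    have hsum : (∑ i ∈ Finset.Icc 1 n, systI M i ^ t •
        ((ThetaE M i).subtype ∘ₗ (orthogonalProjection (ThetaE M i)).toLinearMap ∘ₗ
          Matrix.toEuclideanLin M))
        = systI M 1 ^ t • Matrix.toEuclideanLin M := by
      rw [Finset.sum_eq_single 1 ?f2 ?g2]
      case f2 =>
        intro b hb hb1
        have hb' := Finset.mem_Icc.mp hb
        rw [hThetai b (by omega) hb'.2]
        refine smul_eq_zero_of_right _ (LinearMap.ext fun x => ?_)
        have hz : (orthogonalProjection (⊥ : Submodule ℝ (EuclideanSpace ℝ (Fin n)))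
            (Matrix.toEuclideanLin M x)) = 0 := Subsingleton.elim _ _
        simp [hz]
      case g2 =>
        intro h; exact absurd (Finset.mem_Icc.mpr ⟨le_rfl, hn⟩) h
      congr 1
      rw [hTheta1]
      refine LinearMap.ext fun x => ?_
      simp [Submodule.starProjection_eq_self_iff]
    rw [hsum, smul_smul, inv_mul_cancel₀ (Real.rpow_pos_of_pos hs1pos t).ne', one_smul]
  · -- Part 2 : not well-rounded
    intro hwr v hv
    set x : EuclideanSpace ℝ (Fin n) := vecE (intVec v) with hxdef
    set y : EuclideanSpace ℝ (Fin n) := Matrix.toEuclideanLin M x with hydef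
    have hspos : ∀ i ∈ Finset.Icc 1 n, 0 < systI M i := by
      intro i hi
      have hi' := Finset.mem_Icc.mp hi
      exact lt_of_lt_of_le hc0 (le_systI hc hi'.1 hi'.2)
    have hsle : ∀ i ∈ Finset.Icc 1 n, systI M 1 ≤ systI M i := by
      intro i hi
      have hi' := Finset.mem_Icc.mp hi
      exact systI_mono hc le_rfl hi'.1 hi'.2
    have hsum := sum_d hMN hNM hc hn
    have hex := exists_k hMN hNM hc0 hc hn hwr
    set P : ℝ := ∏ i ∈ Finset.Icc 1 n,
      systI M i ^ ((finrank ℝ (ThetaE M i) : ℝ) / n) with hPdef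
    have hP : systI M 1 < P :=
      prod_rpow_lt hn (fun i => systI M i) (fun i => finrank ℝ (ThetaE M i))
        hspos hsle hsum hex
    have hPpos : 0 < P := hs1pos.trans hP
    have hproj0 : ∀ i : ℕ, 2 ≤ i → i ≤ n →
        orthogonalProjection (ThetaE M i) y = 0 := by
      intro i h2 hin
      apply Submodule.orthogonalProjectionOnto_apply_of_mem_orthogonal
      have h1 : ThetaE M i ≤ ((LambdaE M (i - 1)).map (Matrix.toEuclideanLin M))ᗮ :=
        inf_le_left
      have h3 : (LambdaE M (i - 1)).map (Matrix.toEuclideanLin M) ≤ (ThetaE M i)ᗮ :=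
        le_trans (Submodule.le_orthogonal_orthogonal _) (Submodule.orthogonal_le h1)
      exact h3 ⟨x, LambdaE_mono hc (show (1:ℕ) ≤ i - 1 by omega) (by omega) hv, rfl⟩
    have hnne : (n:ℝ) ≠ 0 := by positivity
    have hcN : ∀ t : ℝ, cNorm M t = P ^ t := by
      intro t
      unfold cNorm
      have hterm : ∀ i ∈ Finset.Icc 1 n,
          systI M i ^ (t * (finrank ℝ (ThetaE M i) : ℝ))
            = (systI M i ^ ((finrank ℝ (ThetaE M i) : ℝ) / n)) ^ (t * n) := by
        intro i hi
        rw [← Real.rpow_mul (hspos i hi).le]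
        congr 1
        field_simp
      rw [Finset.prod_congr rfl hterm,
        Real.finset_prod_rpow _ _ (fun i hi => Real.rpow_nonneg (hspos i hi).le _) _,
        ← hPdef, ← Real.rpow_mul hPpos.le]
      congr 1
      field_simp
    have hnorm : ∀ t : ℝ, ‖PhiLin M t x‖
        = (systI M 1 / P) ^ t * ‖(orthogonalProjection (ThetaE M 1) y :
            EuclideanSpace ℝ (Fin n))‖ := by
      intro t
      have happ : PhiLin M t x = (cNorm M t)⁻¹ • (systI M 1 ^ t •
          ((ThetaE M 1).subtype ((orthogonalProjection (ThetaE M 1)) y))) := by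
        unfold PhiLin
        rw [LinearMap.smul_apply]
        congr 1
        rw [LinearMap.sum_apply]
        rw [Finset.sum_eq_single 1 ?f3 ?g3]
        case f3 =>
          intro b hb hb1
          have hb' := Finset.mem_Icc.mp hb
          rw [LinearMap.smul_apply]
          apply smul_eq_zero_of_right
          show (ThetaE M b).subtype ((orthogonalProjection (ThetaE M b)) y) = 0
          rw [hproj0 b (by omega) hb'.2, map_zero]
        case g3 =>
          intro h
          exact absurd (Finset.mem_Icc.mpr ⟨le_rfl, hn⟩) h
        rfl
      rw [happ, norm_smul, norm_smul, hcN]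
      rw [Real.norm_eq_abs, Real.norm_eq_abs,
        abs_of_nonneg (inv_nonneg.mpr (Real.rpow_nonneg hPpos.le t)),
        abs_of_nonneg (Real.rpow_nonneg hs1pos.le t),
        Real.div_rpow hs1pos.le hPpos.le]
      have hns : ‖(ThetaE M 1).subtype ((orthogonalProjection (ThetaE M 1)) y)‖
          = ‖(orthogonalProjection (ThetaE M 1) y : EuclideanSpace ℝ (Fin n))‖ := rfl
      rw [hns]
      field_simp
    have hfin := tendsto_q_mul_K
      (q := systI M 1 / P)
      (K := ‖(orthogonalProjection (ThetaE M 1) y : EuclideanSpace ℝ (Fin n))‖)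
      (div_nonneg hs1pos.le hPpos.le) ((div_lt_one hPpos).mpr hP)
    simp only [hnorm]
    exact hfin
end
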